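/- Let p be a prime, let M be a free ℤ_p-module of rank d, let 1 ≤ i ≤ d, and let n ≥ 1 be an integer. For N₀, N ∈ Gr(i, M), the inclusion N ⊆ N₀ + pⁿM holds if and only if there exists a ℤ_p-module automorphism g of M with (g − id)(M) ⊆ pⁿM and g(N₀) = N. (Equivalently: the orbit of N₀ under the subgroup 1 + pⁿ·End(M) of Aut(M) equals the set {N ∈ Gr(i, M) : N ⊆ N₀ + pⁿM}.) -/

import Mathlib

open Module

lemma mem_span_singleton_smul_top {R : Type*} [CommRing R] {M : Type*} [AddCommGroup M]
    [Module R M] (a : R) (x : M) :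
    x ∈ Ideal.span {a} • (⊤ : Submodule R M) ↔ ∃ y, a • y = x := by
  constructor
  · intro hx
    refine Submodule.smul_induction_on hx ?_ ?_
    · rintro r hr m -
      rw [Ideal.mem_span_singleton] at hr
      obtain ⟨c, rfl⟩ := hr
      exact ⟨c • m, by rw [smul_smul, mul_smul]⟩
    · rintro x y ⟨u, rfl⟩ ⟨v, rfl⟩
      exact ⟨u + v, by rw [smul_add]⟩
  · rintro ⟨y, rfl⟩
    exact Submodule.smul_mem_smul (Ideal.mem_span_singleton_self a) trivial

lemma eq_of_le_of_quot_iso {R : Type*} [CommRing R] {M : Type*} [AddCommGroup M] [Module R M]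
    {A B : Submodule R M} (hAB : A ≤ B) [Module.Finite R (M ⧸ A)]
    (e : (M ⧸ B) ≃ₗ[R] (M ⧸ A)) : A = B := by
  set φ : (M ⧸ A) →ₗ[R] (M ⧸ B) := A.mapQ B LinearMap.id hAB with hφ
  have hφs : Function.Surjective φ := by
    intro y
    obtain ⟨x, rfl⟩ := Submodule.mkQ_surjective B y
    exact ⟨A.mkQ x, by simp [hφ, Submodule.mapQ_apply]⟩
  have hend : Function.Surjective (e.toLinearMap ∘ₗ φ) := e.surjective.comp hφs
  have hinj : Function.Injective (e.toLinearMap ∘ₗ φ) :=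
    OrzechProperty.injective_of_surjective_endomorphism _ hend
  have hφi : Function.Injective φ := by
    intro x y hxy
    exact hinj (by simp [LinearMap.comp_apply, hxy])
  refine le_antisymm hAB ?_
  intro x hx
  have h0 : φ (A.mkQ x) = 0 := by
    simp [hφ, Submodule.mapQ_apply, Submodule.Quotient.mk_eq_zero, hx]
  have := hφi (a₁ := A.mkQ x) (a₂ := 0) (by simpa using h0)
  simpa [Submodule.Quotient.mk_eq_zero] using this

lemma iso_of_finrank_eq {R : Type*} [CommRing R] [StrongRankCondition R] {Q Q' : Type*}
    [AddCommGroup Q] [Module R Q] [AddCommGroup Q'] [Module R Q']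
    [Module.Free R Q] [Module.Finite R Q] [Module.Free R Q'] [Module.Finite R Q']
    (h : finrank R Q = finrank R Q') : Nonempty (Q ≃ₗ[R] Q') := by
  have b := Module.Free.chooseBasis R Q
  have b' := Module.Free.chooseBasis R Q'
  have hc : Fintype.card (Module.Free.ChooseBasisIndex R Q)
      = Fintype.card (Module.Free.ChooseBasisIndex R Q') := by
    rw [← Module.finrank_eq_card_chooseBasisIndex, ← Module.finrank_eq_card_chooseBasisIndex, h]
  exact ⟨b.equiv b' (Fintype.equivOfCardEq hc)⟩


lemma span_smul_top_pi_eq {R : Type*} [CommRing R] (a : R) (i : ℕ) :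
    (Ideal.span {a} • (⊤ : Submodule R (Fin i → R)))
      = Submodule.pi Set.univ (fun _ : Fin i => (Ideal.span {a} : Submodule R R)) := by
  ext x
  rw [mem_span_singleton_smul_top]
  simp only [Submodule.mem_pi, Set.mem_univ, forall_true_left, Ideal.mem_span_singleton]
  constructor
  · rintro ⟨y, rfl⟩ j
    exact ⟨y j, by simp [mul_comm]⟩
  · intro hj
    choose c hc using hj
    exact ⟨c, by funext j; simp [hc j, smul_eq_mul, mul_comm]⟩

lemma quot_sup_smul_equiv {R : Type*} [CommRing R] [StrongRankCondition R] {M : Type*}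
    [AddCommGroup M] [Module R M] (a : R) (S : Submodule R M) (i : ℕ)
    [Module.Free R (M ⧸ S)] [Module.Finite R (M ⧸ S)] (h : finrank R (M ⧸ S) = i) :
    Nonempty ((M ⧸ (S ⊔ Ideal.span {a} • (⊤ : Submodule R M))) ≃ₗ[R]
      (Fin i → R ⧸ (Ideal.span {a} : Submodule R R))) := by
  set P : Submodule R M := Ideal.span {a} • ⊤ with hP
  have e1 := (Submodule.quotientQuotientEquivQuotient S (S ⊔ P) le_sup_left).symm
  have hmap : Submodule.map S.mkQ (S ⊔ P) = Ideal.span {a} • (⊤ : Submodule R (M ⧸ S)) := by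
    rw [Submodule.map_sup, hP, Submodule.map_smul'', Submodule.map_top, Submodule.range_mkQ]
    have hbot : Submodule.map S.mkQ S = ⊥ :=
      LinearMap.le_ker_iff_map.mp (by rw [Submodule.ker_mkQ])
    rw [hbot, bot_sup_eq]
  have q1 := Submodule.quotEquivOfEq _ _ hmap
  -- basis of M ⧸ S indexed by Fin i
  have hc : Fintype.card (Module.Free.ChooseBasisIndex R (M ⧸ S)) = i := by
    rw [← Module.finrank_eq_card_chooseBasisIndex, h]
  let b : Basis (Fin i) R (M ⧸ S) :=
    (Module.Free.chooseBasis R (M ⧸ S)).reindex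
      (Fintype.equivOfCardEq (by simpa using hc))
  have hmap2 : Submodule.map (b.equivFun : (M ⧸ S) →ₗ[R] (Fin i → R))
      (Ideal.span {a} • (⊤ : Submodule R (M ⧸ S)))
      = Ideal.span {a} • (⊤ : Submodule R (Fin i → R)) := by
    rw [Submodule.map_smul'', Submodule.map_top, LinearEquiv.range]
  have q2 := Submodule.Quotient.equiv
    (Ideal.span {a} • (⊤ : Submodule R (M ⧸ S)))
    (Ideal.span {a} • (⊤ : Submodule R (Fin i → R)))
    (b.equivFun) hmap2
  have q3 := Submodule.quotEquivOfEq _ _ (span_smul_top_pi_eq (R := R) a i)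
  have q4 := Submodule.quotientPi (fun _ : Fin i => (Ideal.span {a} : Submodule R R))
  exact ⟨e1 ≪≫ₗ q1 ≪≫ₗ q2 ≪≫ₗ q3 ≪≫ₗ q4⟩

lemma sup_smul_eq_of_le {R : Type*} [CommRing R] [StrongRankCondition R] {M : Type*}
    [AddCommGroup M] [Module R M] [Module.Finite R M] (a : R) (S T : Submodule R M) (i : ℕ)
    [Module.Free R (M ⧸ S)] [Module.Free R (M ⧸ T)]
    (hS : finrank R (M ⧸ S) = i) (hT : finrank R (M ⧸ T) = i)
    (hle : S ≤ T ⊔ Ideal.span {a} • (⊤ : Submodule R M)) :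
    S ⊔ Ideal.span {a} • (⊤ : Submodule R M) = T ⊔ Ideal.span {a} • (⊤ : Submodule R M) := by
  set P : Submodule R M := Ideal.span {a} • ⊤ with hP
  have hAB : S ⊔ P ≤ T ⊔ P := sup_le hle le_sup_right
  obtain ⟨eS⟩ := quot_sup_smul_equiv a S i hS
  obtain ⟨eT⟩ := quot_sup_smul_equiv a T i hT
  exact (eq_of_le_of_quot_iso hAB (eT ≪≫ₗ eS.symm)).symm ▸ rfl

theorem grassmannian_orbit_of_congruence_subgroup
    (p : ℕ) [Fact p.Prime] (d i : ℕ) (hi : 1 ≤ i) (hid : i ≤ d) (n : ℕ) (hn : 1 ≤ n)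
    (M : Type*) [AddCommGroup M] [Module (PadicInt p) M]
    (hfree : Module.Free (PadicInt p) M)
    (hrank : Module.finrank (PadicInt p) M = d)
    (N N₀ : Submodule (PadicInt p) M)
    (hNfree : Module.Free (PadicInt p) (M ⧸ N))
    (hNrank : Module.finrank (PadicInt p) (M ⧸ N) = i)
    (hN₀free : Module.Free (PadicInt p) (M ⧸ N₀))
    (hN₀rank : Module.finrank (PadicInt p) (M ⧸ N₀) = i) :
    N ≤ N₀ ⊔ (Ideal.span {(p : PadicInt p) ^ n} • (⊤ : Submodule (PadicInt p) M)) ↔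
      ∃ g : M ≃ₗ[PadicInt p] M,
        (∀ x : M, g x - x ∈
          (Ideal.span {(p : PadicInt p) ^ n} • (⊤ : Submodule (PadicInt p) M))) ∧
        N₀.map (g : M →ₗ[PadicInt p] M) = N := by
  haveI := hfree
  haveI := hNfree
  haveI := hN₀free
  set R := PadicInt p
  set P : Submodule R M := Ideal.span {(p : R) ^ n} • ⊤ with hPdef
  haveI : Module.Finite R M := Module.finite_of_finrank_pos (by rw [hrank]; omega)
  constructor
  · intro hle
    -- Step 1: N₀ ≤ N ⊔ P
    have hsup : N ⊔ P = N₀ ⊔ P :=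
      sup_smul_eq_of_le ((p : R) ^ n) N N₀ i hNrank hN₀rank hle
    have hN₀le : N₀ ≤ N ⊔ P := hsup ▸ le_sup_left
    -- splitting of N₀
    obtain ⟨s, hs⟩ := Module.projective_lifting_property N₀.mkQ LinearMap.id
      (Submodule.mkQ_surjective N₀)
    have hsval : ∀ y, N₀.mkQ (s y) = y := fun y => LinearMap.congr_fun hs y
    have hπ₀mem : ∀ x : M, x - s (N₀.mkQ x) ∈ N₀ := by
      intro x
      rw [← Submodule.Quotient.mk_eq_zero]
      show N₀.mkQ _ = 0
      rw [map_sub, hsval, sub_self]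
    set π₀ : M →ₗ[R] N₀ := (LinearMap.id - s ∘ₗ N₀.mkQ).codRestrict N₀ hπ₀mem with hπ₀def
    have hπ₀id : ∀ (a : M) (ha : a ∈ N₀), π₀ a = ⟨a, ha⟩ := by
      intro a ha
      ext
      show a - s (N₀.mkQ a) = a
      rw [show N₀.mkQ a = 0 from (Submodule.Quotient.mk_eq_zero _).2 ha, map_zero, sub_zero]
    -- basis of N₀
    obtain ⟨m, e⟩ := Submodule.basisOfPid (Module.Free.chooseBasis R M) N₀
    have hmem : ∀ j : Fin m, ∃ y ∈ N, ∃ z ∈ P, y + z = (e j : M) :=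
      fun j => Submodule.mem_sup.mp (hN₀le (e j).2)
    choose nf hnf qf hqf hsum using hmem
    set δ : N₀ →ₗ[R] M := e.constr R qf with hδdef
    set ν : N₀ →ₗ[R] M := e.constr R nf with hνdef
    have hδrange : LinearMap.range δ ≤ P := by
      rw [hδdef, Basis.constr_range]
      exact Submodule.span_le.mpr (Set.range_subset_iff.mpr hqf)
    have hνrange : LinearMap.range ν ≤ N := by
      rw [hνdef, Basis.constr_range]
      exact Submodule.span_le.mpr (Set.range_subset_iff.mpr hnf)
    have hνδ : N₀.subtype - δ = ν := by
      apply e.ext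
      intro j
      simp only [LinearMap.sub_apply, Submodule.subtype_apply, hδdef, hνdef,
        Basis.constr_basis]
      rw [← hsum j]
      abel
    set g : M →ₗ[R] M := LinearMap.id - δ ∘ₗ π₀ with hgdef
    have hgval : ∀ x : M, g x = x - δ (π₀ x) := fun x => rfl
    have hgsub : ∀ x : M, g x - x ∈ P := by
      intro x
      have : g x - x = -(δ (π₀ x)) := by rw [hgval]; abel
      rw [this]
      exact neg_mem (hδrange ⟨π₀ x, rfl⟩)
    have hgN₀ : ∀ (a : M) (ha : a ∈ N₀), g a ∈ N := by
      intro a ha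
      rw [hgval, hπ₀id a ha]
      have : a - δ ⟨a, ha⟩ = (N₀.subtype - δ) ⟨a, ha⟩ := rfl
      rw [this, hνδ]
      exact hνrange ⟨_, rfl⟩
    -- invertibility of g
    have hdet : IsUnit ((LinearMap.toMatrix (Module.Free.chooseBasis R M)
        (Module.Free.chooseBasis R M)) g).det := by
      set b := Module.Free.chooseBasis R M with hbdef
      set A := LinearMap.toMatrix b b g with hA
      have hmapA : (PadicInt.toZMod).mapMatrix A = 1 := by
        ext j k
        have hAe : A j k = b.repr (g (b k)) j := LinearMap.toMatrix_apply b b g j k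
        obtain ⟨y, hy⟩ := (mem_span_singleton_smul_top ((p : R) ^ n) (g (b k) - b k)).mp
          (hgsub (b k))
        have hgb : g (b k) = b k + ((p : R) ^ n) • y := by rw [hy]; abel
        have hrepr : b.repr (g (b k)) j
            = (Finsupp.single k (1 : R)) j + (p : R) ^ n * (b.repr y) j := by
          rw [hgb, map_add, map_smul, Basis.repr_self]
          simp [Finsupp.add_apply, Finsupp.smul_apply, smul_eq_mul]
        have hker : PadicInt.toZMod ((p : R) ^ n * (b.repr y) j) = 0 := by
          have : (p : R) ^ n * (b.repr y) j ∈ RingHom.ker (PadicInt.toZMod (p := p)) := by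
            rw [PadicInt.ker_toZMod, PadicInt.maximalIdeal_eq_span_p,
              Ideal.mem_span_singleton]
            exact dvd_mul_of_dvd_left (dvd_pow_self _ (by omega)) _
          exact this
        rw [RingHom.mapMatrix_apply, Matrix.map_apply, hAe, hrepr, map_add, hker, add_zero,
          Matrix.one_apply, Finsupp.single_apply]
        by_cases hjk : j = k
        · simp [hjk]
        · rw [if_neg hjk, if_neg (fun h => hjk h.symm), map_zero]
      have hdet1 : PadicInt.toZMod A.det = 1 := by
        rw [RingHom.map_det, hmapA, Matrix.det_one]
      by_contra hne
      have hAmem : A.det ∈ RingHom.ker (PadicInt.toZMod (p := p)) := by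
        rw [PadicInt.ker_toZMod]
        exact IsLocalRing.mem_maximalIdeal _ |>.mpr hne
      rw [RingHom.mem_ker, hdet1] at hAmem
      exact one_ne_zero hAmem
    set gE : M ≃ₗ[R] M := LinearEquiv.ofIsUnitDet hdet with hgEdef
    have hgE : (gE : M →ₗ[R] M) = g := LinearEquiv.coe_ofIsUnitDet hdet
    have hgEval : ∀ x : M, gE x = g x := fun x => by
      rw [← hgE]; rfl
    -- N₀.map g = N
    have hmaple : N₀.map g ≤ N := by
      rintro _ ⟨a, ha, rfl⟩
      exact hgN₀ a ha
    have hmapeq : N₀.map g = N := by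
      have hmapeq0 : Submodule.map (gE : M →ₗ[R] M) N₀ = Submodule.map g N₀ := by
        ext x
        simp only [Submodule.mem_map]
        constructor
        · rintro ⟨y, hy, h⟩; exact ⟨y, hy, by rw [← h, hgE]⟩
        · rintro ⟨y, hy, h⟩; exact ⟨y, hy, by rw [← h, hgE]⟩
      have heq : (M ⧸ N₀) ≃ₗ[R] (M ⧸ N₀.map g) :=
        Submodule.Quotient.equiv N₀ (N₀.map g) gE hmapeq0
      haveI : Module.Free R (M ⧸ N₀.map g) := Module.Free.of_equiv heq
      haveI : Module.Finite R (M ⧸ N₀.map g) := Module.Finite.equiv heq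
      have hfr : finrank R (M ⧸ N₀.map g) = i := by
        rw [← hN₀rank]; exact (LinearEquiv.finrank_eq heq).symm
      obtain ⟨ψ⟩ := iso_of_finrank_eq (R := R) (Q := M ⧸ N) (Q' := M ⧸ N₀.map g)
        (by rw [hNrank, hfr])
      exact eq_of_le_of_quot_iso hmaple ψ
    exact ⟨gE, fun x => by rw [hgEval]; exact hgsub x, by rw [hgE, hmapeq]⟩
  · rintro ⟨g, hgP, hmap⟩
    intro x hx
    rw [← hmap] at hx
    obtain ⟨y, hy, rfl⟩ := hx
    have : (g : M →ₗ[R] M) y = y + ((g : M →ₗ[R] M) y - y) := by abel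
    rw [this]
    exact add_mem (Submodule.mem_sup_left hy) (Submodule.mem_sup_right (hgP y))
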